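/- For n ≥ 2, let a ∈ ℂⁿ be nonzero and A = aᵗa ∈ ℂ^{n×n}. Then the function φ̂_a : SU(n) → ℂ, φ̂_a(z) = trace(A·z·zᵗ), has no critical points: at every z ∈ SU(n) there exists a left-invariant vector field X in the orthogonal complement 𝔭 = i·{symmetric traceless real matrices} of 𝔰𝔬(n) in 𝔰𝔲(n) with X(φ̂_a)(z) ≠ 0. -/

import Mathlib

open Matrix

/-- Derivative of the matrix-valued curve. -/
private lemma aux_hasDerivAt {n : ℕ} (A z X : Matrix (Fin n) (Fin n) ℂ) (hX : Xᵀ = X) :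
    HasDerivAt (fun s : ℝ =>
      Matrix.trace (A * (z * NormedSpace.exp (s • X)) *
        (z * NormedSpace.exp (s • X))ᵀ))
      (2 * Matrix.trace (zᵀ * A * z * X)) 0 := by
  letI : NormedRing (Matrix (Fin n) (Fin n) ℂ) := Matrix.linftyOpNormedRing
  letI : NormedAlgebra ℝ (Matrix (Fin n) (Fin n) ℂ) := Matrix.linftyOpNormedAlgebra
  have hE : HasDerivAt (fun s : ℝ => NormedSpace.exp (s • X)) X 0 := by
    have := hasDerivAt_exp_smul_const (𝕂 := ℝ) X 0; simp at this; exact this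
  have hG : HasDerivAt (fun s : ℝ => z * NormedSpace.exp (s • X)) (z * X) 0 :=
    hE.const_mul z
  -- transpose as a continuous linear map
  let T : Matrix (Fin n) (Fin n) ℂ →L[ℝ] Matrix (Fin n) (Fin n) ℂ :=
    LinearMap.toContinuousLinearMap
      ((Matrix.transposeLinearEquiv (Fin n) (Fin n) ℝ ℂ).toLinearMap)
  have hGT : HasDerivAt (fun s : ℝ => (z * NormedSpace.exp (s • X))ᵀ) (z * X)ᵀ 0 :=
    T.hasFDerivAt.comp_hasDerivAt 0 hG
  have hP : HasDerivAt (fun s : ℝ =>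
      (A * (z * NormedSpace.exp (s • X))) * (z * NormedSpace.exp (s • X))ᵀ)
      (A * (z * X) * (z * (1:Matrix (Fin n) (Fin n) ℂ))ᵀ
        + A * (z * (1:Matrix (Fin n) (Fin n) ℂ)) * (z * X)ᵀ) 0 := by
    have := (hG.const_mul A).mul hGT
    simp [NormedSpace.exp_zero] at this ⊢; exact this
  let Tr : Matrix (Fin n) (Fin n) ℂ →L[ℝ] ℂ :=
    LinearMap.toContinuousLinearMap
      ((Matrix.traceLinearMap (Fin n) ℂ ℂ).restrictScalars ℝ)
  have h := Tr.hasFDerivAt.comp_hasDerivAt 0 hP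
  have key : Tr (A * (z * X) * (z * (1:Matrix (Fin n) (Fin n) ℂ))ᵀ
        + A * (z * (1:Matrix (Fin n) (Fin n) ℂ)) * (z * X)ᵀ)
      = 2 * Matrix.trace (zᵀ * A * z * X) := by
    have hTr : ∀ M, Tr M = Matrix.trace M := fun _ => rfl
    rw [hTr]
    simp only [transpose_mul, transpose_one, one_mul, mul_one, hX, Matrix.trace_add]
    have h1 : (A * (z * X) * zᵀ).trace = (zᵀ * A * z * X).trace := by
      rw [Matrix.trace_mul_comm, ← mul_assoc, ← mul_assoc]
    have h2 : (A * z * (X * zᵀ)).trace = (zᵀ * A * z * X).trace := by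
      rw [← mul_assoc, Matrix.trace_mul_comm, ← mul_assoc, ← mul_assoc]
    rw [h1, h2]; ring
  have h := h.congr_deriv key
  exact h

private lemma aux_trace_std {n : ℕ} (N : Matrix (Fin n) (Fin n) ℂ) (r s : Fin n) :
    (N * Matrix.single r s (1:ℂ)).trace = N s r := by
  simp [Matrix.trace, Matrix.diag, Matrix.mul_apply, Matrix.single, ite_and,
    Finset.sum_ite_eq, Finset.sum_ite_eq']

private lemma aux_std_transpose {n : ℕ} {α : Type*} [Zero α] (r s : Fin n) (c : α) :
    (Matrix.single r s c)ᵀ = Matrix.single s r c := by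
  ext i j
  simp [Matrix.single, and_comm]

private lemma aux_sym_lift {n : ℕ} {B : Matrix (Fin n) (Fin n) ℝ} (hB : Bᵀ = B) :
    (Complex.I • B.map Complex.ofReal)ᵀ = Complex.I • B.map Complex.ofReal := by
  rw [Matrix.transpose_smul, ← Matrix.transpose_map, hB]

/-- For `n ≥ 2`, let `a ∈ ℂⁿ` be nonzero and `A = aᵗa`.  Then
`φ̂_a : SU(n) → ℂ`, `φ̂_a(z) = trace(A·z·zᵗ)`, has no critical points: at every
`z ∈ SU(n)` there is a left-invariant vector field `X` in the orthogonal
complement `𝔭 = i·{symmetric traceless real matrices}` of `𝔰𝔬(n)` in `𝔰𝔲(n)`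
with `X(φ̂_a)(z) = d/ds φ̂_a(z·exp(sX))|_{s=0} ≠ 0`. -/
theorem stmt_11 {n : ℕ} (hn : 2 ≤ n) (a : Fin n → ℂ) (ha : a ≠ 0)
    (A : Matrix (Fin n) (Fin n) ℂ) (hA : A = Matrix.vecMulVec a a)
    (z : Matrix (Fin n) (Fin n) ℂ)
    (hz : z ∈ Matrix.specialUnitaryGroup (Fin n) ℂ) :
    ∃ X : Matrix (Fin n) (Fin n) ℂ,
      (∃ B : Matrix (Fin n) (Fin n) ℝ, Bᵀ = B ∧ Matrix.trace B = 0 ∧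
        X = Complex.I • B.map (Complex.ofReal)) ∧
      deriv (fun s : ℝ =>
        Matrix.trace (A * (z * NormedSpace.exp (s • X)) *
          (z * NormedSpace.exp (s • X))ᵀ)) 0 ≠ 0 := by
  haveI : Nontrivial (Fin n) := Fin.nontrivial_iff_two_le.mpr hn
  set w : Fin n → ℂ := Matrix.vecMul a z with hwdef
  have hzdet : IsUnit z.det := by
    rw [(Matrix.mem_specialUnitaryGroup_iff).mp hz |>.2]; exact isUnit_one
  have hW : w ≠ 0 := by
    intro h0
    apply ha
    have h1 : (a ᵥ* z) ᵥ* z⁻¹ = 0 := by rw [← hwdef, h0, Matrix.zero_vecMul]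
    rwa [Matrix.vecMul_vecMul, Matrix.mul_nonsing_inv z hzdet, Matrix.vecMul_one] at h1
  obtain ⟨r, hr⟩ := Function.ne_iff.mp hW
  simp only [Pi.zero_apply] at hr
  have hC : zᵀ * A * z = Matrix.vecMulVec w w := by
    subst hA
    ext i j
    simp only [Matrix.mul_apply, Matrix.vecMulVec_apply, Matrix.transpose_apply,
      hwdef, Matrix.vecMul, dotProduct, Finset.sum_mul, Finset.mul_sum]
    exact Finset.sum_congr rfl fun k _ => Finset.sum_congr rfl fun j' _ => by ring
  have main : ∀ X : Matrix (Fin n) (Fin n) ℂ, Xᵀ = X →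
      deriv (fun s : ℝ =>
        Matrix.trace (A * (z * NormedSpace.exp (s • X)) *
          (z * NormedSpace.exp (s • X))ᵀ)) 0
        = 2 * (Matrix.vecMulVec w w * X).trace := by
    intro X hX
    rw [(aux_hasDerivAt A z X hX).deriv, hC]
  by_cases hex : ∃ s, s ≠ r ∧ w s ≠ 0
  · obtain ⟨s, hsr, hs⟩ := hex
    have hB : (Matrix.single r s (1:ℝ) + Matrix.single s r 1)ᵀ
        = Matrix.single r s (1:ℝ) + Matrix.single s r 1 := by
      rw [Matrix.transpose_add, aux_std_transpose, aux_std_transpose, add_comm]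
    refine ⟨Complex.I • (Matrix.single r s (1:ℝ) +
      Matrix.single s r 1).map Complex.ofReal,
      ⟨_, hB, ?_, rfl⟩, ?_⟩
    · simp [Matrix.trace_add, Matrix.trace_single_eq_of_ne _ _ _ hsr,
        Matrix.trace_single_eq_of_ne _ _ _ hsr.symm]
    · rw [main _ (aux_sym_lift hB)]
      have hmap : (Matrix.single r s (1:ℝ) +
          Matrix.single s r 1).map Complex.ofReal
          = Matrix.single r s (1:ℂ) + Matrix.single s r 1 := by
        ext i j
        simp [Matrix.single, apply_ite Complex.ofReal]
      rw [hmap, Matrix.mul_smul, Matrix.trace_smul, smul_eq_mul, mul_add,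
        Matrix.trace_add, aux_trace_std, aux_trace_std,
        Matrix.vecMulVec_apply, Matrix.vecMulVec_apply]
      have h2 : w s * w r + w r * w s = 2 * (w r * w s) := by ring
      rw [h2]
      simp [Complex.I_ne_zero, hr, hs]
  · push_neg at hex
    obtain ⟨s, hsr⟩ := exists_ne r
    have hws : w s = 0 := hex s hsr
    have hB : (Matrix.single r r (1:ℝ) - Matrix.single s s 1)ᵀ
        = Matrix.single r r (1:ℝ) - Matrix.single s s 1 := by
      rw [Matrix.transpose_sub, aux_std_transpose, aux_std_transpose]
    refine ⟨Complex.I • (Matrix.single r r (1:ℝ) -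
      Matrix.single s s 1).map Complex.ofReal,
      ⟨_, hB, ?_, rfl⟩, ?_⟩
    · simp [Matrix.trace_sub, Matrix.trace_single_eq_same]
    · rw [main _ (aux_sym_lift hB)]
      have hmap : (Matrix.single r r (1:ℝ) -
          Matrix.single s s 1).map Complex.ofReal
          = Matrix.single r r (1:ℂ) - Matrix.single s s 1 := by
        ext i j
        simp [Matrix.single, apply_ite Complex.ofReal]
      rw [hmap, Matrix.mul_smul, Matrix.trace_smul, smul_eq_mul, mul_sub,
        Matrix.trace_sub, aux_trace_std, aux_trace_std,
        Matrix.vecMulVec_apply, Matrix.vecMulVec_apply, hws]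
      simp [Complex.I_ne_zero, hr]
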